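/- For all integers q and m with q ≥ m + 2 and m ≥ 3, the inequality [m−1 over 1]_q · [m over 1]_q^{m−1} + [m−1 over 1]_q² · [2m−3 over m−2]_q < q^{m(m−1)} holds. -/

import Mathlib

/-- The Gaussian binomial coefficient `[n over m]_q`, as a rational number. -/
def gaussBinom (q n m : ℕ) : ℚ :=
  ∏ i ∈ Finset.range m, ((q : ℚ) ^ (n - i) - 1) / ((q : ℚ) ^ (m - i) - 1)

private lemma aux_pow (Q : ℚ) (hQ : 1 ≤ Q) : ∀ n : ℕ, Q ^ n * (Q - (n + 1)) ≤ (Q - 1) ^ (n + 1) := by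
  intro n
  induction n with
  | zero => simp
  | succ n ih =>
    have hp : (0:ℚ) ≤ Q ^ n := pow_nonneg (by linarith) n
    have h2 : Q ^ n * (Q - (n + 1)) * (Q - 1) ≤ (Q - 1) ^ (n + 1) * (Q - 1) :=
      mul_le_mul_of_nonneg_right ih (by linarith)
    calc Q ^ (n + 1) * (Q - ((n + 1 : ℕ) + 1))
        ≤ Q ^ n * (Q - (n + 1)) * (Q - 1) := by
          have hps : Q ^ (n + 1) = Q ^ n * Q := pow_succ Q n
          push_cast
          nlinarith [hp, hps, mul_nonneg hp (by positivity : (0:ℚ) ≤ (n:ℚ) + 1)]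
      _ ≤ (Q - 1) ^ (n + 1) * (Q - 1) := h2
      _ = (Q - 1) ^ (n + 1 + 1) := by ring

private lemma factor_le (Q : ℚ) (hQ : 2 ≤ Q) (b c : ℕ) (hb : 1 ≤ b) :
    (Q ^ (b + c) - 1) / (Q ^ b - 1) ≤ Q ^ (c + 1) / (Q - 1) := by
  have h1 : (1:ℚ) < Q ^ b := one_lt_pow₀ (by linarith) (by omega)
  rw [div_le_div_iff₀ (by linarith) (by linarith)]
  have h2 : Q ^ (c + 1) ≤ Q ^ (b + c) := pow_le_pow_right₀ (by linarith) (by omega)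
  have hA : Q ^ (c + 1) * Q ^ b = Q ^ (b + c) * Q := by
    rw [← pow_add, ← pow_succ]
    congr 1
    omega
  nlinarith [hA, h2, hQ]

private lemma gauss_one (q n : ℕ) : gaussBinom q n 1 = ((q:ℚ) ^ n - 1) / ((q:ℚ) - 1) := by
  simp [gaussBinom]

private lemma gauss_le (q k : ℕ) (hq : 2 ≤ q) :
    gaussBinom q (2 * k + 3) (k + 1) ≤ (((q:ℚ)) ^ (k + 3) / ((q:ℚ) - 1)) ^ (k + 1) := by
  have hQ : (2:ℚ) ≤ (q:ℚ) := by exact_mod_cast hq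
  unfold gaussBinom
  refine le_trans (Finset.prod_le_prod (g := fun _ => (q:ℚ) ^ (k + 3) / ((q:ℚ) - 1)) ?_ ?_) (le_of_eq ?_)
  · intro i hi
    rw [Finset.mem_range] at hi
    apply div_nonneg
    · have : (1:ℚ) ≤ (q:ℚ) ^ (2 * k + 3 - i) := one_le_pow₀ (by linarith)
      linarith
    · have : (1:ℚ) ≤ (q:ℚ) ^ (k + 1 - i) := one_le_pow₀ (by linarith)
      linarith
  · intro i hi
    rw [Finset.mem_range] at hi
    have hb : 1 ≤ k + 1 - i := by omega
    have heq : 2 * k + 3 - i = (k + 1 - i) + (k + 2) := by omega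
    rw [heq]
    simpa using factor_le (q:ℚ) hQ (k + 1 - i) (k + 2) hb
  · rw [Finset.prod_const, Finset.card_range]

private lemma gauss_nonneg (q n m : ℕ) (hq : 2 ≤ q) : 0 ≤ gaussBinom q n m := by
  have hQ : (2:ℚ) ≤ (q:ℚ) := by exact_mod_cast hq
  apply Finset.prod_nonneg
  intro i hi
  apply div_nonneg
  · have : (1:ℚ) ≤ (q:ℚ) ^ (n - i) := one_le_pow₀ (by linarith)
    linarith
  · have : (1:ℚ) ≤ (q:ℚ) ^ (m - i) := one_le_pow₀ (by linarith)
    linarith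

theorem stmt13 {q m : ℕ} (hqm : m + 2 ≤ q) (hm : 3 ≤ m) :
    gaussBinom q (m - 1) 1 * gaussBinom q m 1 ^ (m - 1) +
        gaussBinom q (m - 1) 1 ^ 2 * gaussBinom q (2 * m - 3) (m - 2) <
      (q : ℚ) ^ (m * (m - 1)) := by
  obtain ⟨k, rfl⟩ : ∃ k, m = k + 3 := ⟨m - 3, by omega⟩
  have e1 : k + 3 - 1 = k + 2 := by omega
  have e2 : 2 * (k + 3) - 3 = 2 * k + 3 := by omega
  have e3 : k + 3 - 2 = k + 1 := by omega
  rw [e1, e2, e3]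
  set Q : ℚ := (q : ℚ) with hQdef
  have hq2 : 2 ≤ q := by omega
  have hQk : (k:ℚ) + 5 ≤ Q := by
    have : ((k + 5 : ℕ) : ℚ) ≤ (q : ℚ) := Nat.cast_le.mpr (by omega)
    push_cast at this; linarith
  have hQ5 : (5:ℚ) ≤ Q := by
    have : (0:ℚ) ≤ (k:ℚ) := Nat.cast_nonneg k
    linarith
  have hQ1 : (0:ℚ) < Q - 1 := by linarith
  have hQ0 : (0:ℚ) < Q := by linarith
  -- bounds for the linear gaussians
  have h1 : gaussBinom q (k + 2) 1 ≤ Q ^ (k + 2) / (Q - 1) := by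
    rw [gauss_one]
    gcongr <;> linarith
  have h2 : gaussBinom q (k + 3) 1 ≤ Q ^ (k + 3) / (Q - 1) := by
    rw [gauss_one]
    gcongr <;> linarith
  have h3 := gauss_le q k hq2
  have h1' : 0 ≤ gaussBinom q (k + 2) 1 := gauss_nonneg q (k + 2) 1 hq2
  have h2' : 0 ≤ gaussBinom q (k + 3) 1 := gauss_nonneg q (k + 3) 1 hq2
  have h3' : 0 ≤ gaussBinom q (2 * k + 3) (k + 1) := gauss_nonneg q (2 * k + 3) (k + 1) hq2
  have hb1 : (0:ℚ) ≤ Q ^ (k + 2) / (Q - 1) := by positivity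
  have hb2 : (0:ℚ) ≤ Q ^ (k + 3) / (Q - 1) := by positivity
  have key : gaussBinom q (k + 2) 1 * gaussBinom q (k + 3) 1 ^ (k + 2) +
      gaussBinom q (k + 2) 1 ^ 2 * gaussBinom q (2 * k + 3) (k + 1) ≤
      (Q ^ (k + 2) / (Q - 1)) * (Q ^ (k + 3) / (Q - 1)) ^ (k + 2) +
      (Q ^ (k + 2) / (Q - 1)) ^ 2 * (Q ^ (k + 3) / (Q - 1)) ^ (k + 1) := by
    apply add_le_add
    · exact mul_le_mul h1 (pow_le_pow_left₀ h2' h2 _) (pow_nonneg h2' _) hb1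
    · exact mul_le_mul (pow_le_pow_left₀ h1' h1 2) h3 h3' (by positivity)
  refine lt_of_le_of_lt key ?_
  -- rewrite as a single fraction
  have eL : (Q ^ (k + 2) / (Q - 1)) * (Q ^ (k + 3) / (Q - 1)) ^ (k + 2) +
      (Q ^ (k + 2) / (Q - 1)) ^ 2 * (Q ^ (k + 3) / (Q - 1)) ^ (k + 1) =
      (Q ^ ((k + 3) * (k + 2) + (k + 2)) + Q ^ ((k + 3) * (k + 1) + 2 * (k + 2))) / (Q - 1) ^ (k + 3) := by
    rw [div_pow, div_pow, div_pow]
    rw [div_mul_div_comm, div_mul_div_comm]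
    rw [← pow_mul, ← pow_mul, ← pow_succ', ← pow_add]
    rw [div_add_div _ _ (by positivity) (by positivity)]
    rw [div_eq_div_iff (by positivity) (by positivity)]
    ring
  rw [eL, div_lt_iff₀ (by positivity)]
  -- Bernoulli bound: 2 * Q ^ (k+2) ≤ (Q-1)^(k+3)
  have hber := aux_pow Q (by linarith) (k + 2)
  have hb : 2 * Q ^ (k + 2) ≤ (Q - 1) ^ (k + 3) := by
    have hp : (0:ℚ) ≤ Q ^ (k + 2) := by positivity
    have h5 : (2:ℚ) ≤ Q - ((k + 2 : ℕ) + 1) := by push_cast; linarith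
    nlinarith [hber, hp, h5]
  have hexp : (k + 3) * (k + 1) + 2 * (k + 2) < (k + 3) * (k + 2) + (k + 2) := by nlinarith
  have hlt : Q ^ ((k + 3) * (k + 1) + 2 * (k + 2)) < Q ^ ((k + 3) * (k + 2) + (k + 2)) :=
    pow_lt_pow_right₀ (by linarith) hexp
  have hmul : Q ^ ((k + 3) * (k + 2)) * (2 * Q ^ (k + 2)) ≤ Q ^ ((k + 3) * (k + 2)) * (Q - 1) ^ (k + 3) :=
    mul_le_mul_of_nonneg_left hb (by positivity)
  have hpe : Q ^ ((k + 3) * (k + 2)) * (2 * Q ^ (k + 2)) = 2 * Q ^ ((k + 3) * (k + 2) + (k + 2)) := by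
    rw [pow_add]; ring
  calc Q ^ ((k + 3) * (k + 2) + (k + 2)) + Q ^ ((k + 3) * (k + 1) + 2 * (k + 2))
      < 2 * Q ^ ((k + 3) * (k + 2) + (k + 2)) := by linarith
    _ = Q ^ ((k + 3) * (k + 2)) * (2 * Q ^ (k + 2)) := hpe.symm
    _ ≤ Q ^ ((k + 3) * (k + 2)) * (Q - 1) ^ (k + 3) := hmul
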